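/- Let p be a prime and m ≥ 2 an integer. Write N_{m−1} for the total number of one-dimensional 𝔽_{p²}-subspaces of 𝔽_{p²}^{m−1} (i.e., the number of points of ℙ^{m−2}(𝔽_{p²})). Then Θ_m = Θ_{m−1} + (N_{m−1} − Θ_{m−1})·(p + 1). -/

import Mathlib

open Projectivization Polynomial

/-- The number of points of the Hermitian hypersurface
`x₁^(p+1) + ⋯ + x_m^(p+1) = 0` in `ℙ^(m-1)(𝔽_{p²})`. -/
noncomputable def hermTheta (p : ℕ) [Fact p.Prime] (m : ℕ) : ℕ :=
  Nat.card {x : Projectivization (GaloisField p 2) (Fin m → GaloisField p 2) //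
    ∑ i, (x.rep i) ^ (p + 1) = 0}

/-- The total number of points of `ℙ^(m-1)(𝔽_{p²})`, i.e. of one-dimensional
`𝔽_{p²}`-subspaces of `𝔽_{p²}^m`. -/
noncomputable def projCard (p : ℕ) [Fact p.Prime] (m : ℕ) : ℕ :=
  Nat.card (Projectivization (GaloisField p 2) (Fin m → GaloisField p 2))

section Aux

variable (p : ℕ) [Fact p.Prime]

noncomputable local instance : Fintype (GaloisField p 2) := Fintype.ofFinite _

lemma gfCard : Fintype.card (GaloisField p 2) = p ^ 2 := by
  rw [← Nat.card_eq_fintype_card, GaloisField.card p 2 (by norm_num)]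

lemma gfPowCard (x : GaloisField p 2) : x ^ p ^ 2 = x := by
  have := FiniteField.pow_card x
  rwa [gfCard] at this

lemma sq_sub_one' : p ^ 2 - 1 = (p - 1) * (p + 1) := by
  have := Nat.sq_sub_sq p 1
  simpa [mul_comm] using this

open scoped Classical in
lemma count_sol (a : GaloisField p 2) (hfix : a ^ p = a) :
    Nat.card {t : GaloisField p 2 // t ^ (p + 1) = a} =
      if a = 0 then 1 else p + 1 := by
  classical
  have hp2 : 2 ≤ p := (Fact.out : p.Prime).two_le
  by_cases ha : a = 0
  · subst ha
    rw [if_pos rfl, Nat.card_eq_one_iff_unique]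
    constructor
    · constructor
      intro ⟨t, ht⟩ ⟨t', ht'⟩
      have h1 : t = 0 := pow_eq_zero_iff (n := p + 1) (by omega) |>.mp ht
      have h2 : t' = 0 := pow_eq_zero_iff (n := p + 1) (by omega) |>.mp ht'
      simp [h1, h2]
    · exact ⟨⟨0, by simp [pow_succ]⟩⟩
  · rw [if_neg ha]
    have ha1 : a ^ (p - 1) = 1 := by
      have h : a ^ (p - 1) * a = 1 * a := by
        rw [one_mul, ← pow_succ]
        have hpp : p - 1 + 1 = p := by omega
        rw [hpp, hfix]
      exact mul_right_cancel₀ ha h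
    obtain ⟨g, hg⟩ := IsCyclic.exists_generator (α := (GaloisField p 2)ˣ)
    have hordg : orderOf g = p ^ 2 - 1 := by
      rw [orderOf_eq_card_of_forall_mem_zpowers hg, Nat.card_eq_fintype_card,
        Fintype.card_units, gfCard]
    set au : (GaloisField p 2)ˣ := Units.mk0 a ha with hau
    obtain ⟨k, hk'⟩ := (mem_powers_iff_mem_zpowers).2 (hg au)
    have hk : g ^ k = au := hk'
    have hau1 : au ^ (p - 1) = 1 := by
      ext
      push_cast [hau]
      exact ha1
    have hdvd : p ^ 2 - 1 ∣ k * (p - 1) := by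
      rw [← hordg]
      apply orderOf_dvd_of_pow_eq_one
      rw [pow_mul, hk, hau1]
    have hdvd2 : p + 1 ∣ k := by
      have h1 : (p - 1) * (p + 1) ∣ (p - 1) * k := by
        rw [← sq_sub_one' p]; rwa [mul_comm] at hdvd
      exact (Nat.mul_dvd_mul_iff_left (by omega : 0 < p - 1)).mp h1
    obtain ⟨j, hj⟩ := hdvd2
    set t0 : GaloisField p 2 := ((g ^ j : (GaloisField p 2)ˣ) : GaloisField p 2) with ht0
    have ht0sol : t0 ^ (p + 1) = a := by
      rw [ht0, ← Units.val_pow_eq_pow_val, ← pow_mul, mul_comm j, ← hj, hk, hau]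
      simp
    have ht0ne : t0 ≠ 0 := Units.ne_zero _
    have hordz : orderOf (g ^ (p - 1)) = p + 1 := by
      rw [orderOf_pow, hordg, Nat.gcd_eq_right ⟨p + 1, (sq_sub_one' p)⟩,
        sq_sub_one' p, Nat.mul_div_cancel_left _ (by omega : 0 < p - 1)]
    have hprim : IsPrimitiveRoot ((g ^ (p - 1) : (GaloisField p 2)ˣ) :
        GaloisField p 2) (p + 1) := by
      rw [IsPrimitiveRoot.coe_units_iff]
      exact hordz ▸ IsPrimitiveRoot.orderOf _
    have e : {t : GaloisField p 2 // t ^ (p + 1) = a} ≃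
        {u : GaloisField p 2 // u ^ (p + 1) = 1} :=
      { toFun := fun t => ⟨t.1 * t0⁻¹, by
          rw [mul_pow, t.2, inv_pow, ht0sol, mul_inv_cancel₀ ha]⟩
        invFun := fun u => ⟨u.1 * t0, by rw [mul_pow, u.2, ht0sol, one_mul]⟩
        left_inv := fun t => by ext; field_simp
        right_inv := fun u => by ext; field_simp }
    rw [Nat.card_congr e]
    have e2 : {u : GaloisField p 2 // u ^ (p + 1) = 1} ≃
        {u : GaloisField p 2 // u ∈ nthRootsFinset (p + 1) (1 : GaloisField p 2)} :=
      Equiv.subtypeEquivRight fun u => by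
        rw [Polynomial.mem_nthRootsFinset (by omega)]
    rw [Nat.card_congr e2, Nat.card_eq_fintype_card, Fintype.card_coe,
      hprim.card_nthRootsFinset]

lemma herm_fix (n : ℕ) (y : Fin n → GaloisField p 2) :
    (∑ i, y i ^ (p + 1)) ^ p = ∑ i, y i ^ (p + 1) := by
  rw [sum_pow_char]
  refine Finset.sum_congr rfl fun i _ => ?_
  rw [← pow_mul]
  have h : (p + 1) * p = p ^ 2 + p := by ring
  rw [h, pow_add, gfPowCard, ← pow_succ']

lemma proj_count (n : ℕ) (P : (Fin n → GaloisField p 2) → Prop)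
    (hP : ∀ (c : (GaloisField p 2)ˣ) (v : Fin n → GaloisField p 2),
      P ((c : GaloisField p 2) • v) ↔ P v) :
    Nat.card {v : Fin n → GaloisField p 2 // v ≠ 0 ∧ P v} =
      Nat.card {x : Projectivization (GaloisField p 2) (Fin n → GaloisField p 2) //
        P x.rep} * (p ^ 2 - 1) := by
  classical
  have hbij : Function.Bijective
      (fun zc : {x : Projectivization (GaloisField p 2) (Fin n → GaloisField p 2) //
          P x.rep} × (GaloisField p 2)ˣ =>
        (⟨(zc.2 : GaloisField p 2) • zc.1.1.rep,
          smul_ne_zero (Units.ne_zero _) zc.1.1.rep_nonzero,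
          (hP _ _).2 zc.1.2⟩ : {v : Fin n → GaloisField p 2 // v ≠ 0 ∧ P v})) := by
    constructor
    · rintro ⟨⟨x, hx⟩, c⟩ ⟨⟨x', hx'⟩, c'⟩ h
      simp only [Subtype.mk.injEq] at h
      have hxx : x = x' := by
        have h1 : Projectivization.mk (GaloisField p 2) ((c : GaloisField p 2) • x.rep)
            (smul_ne_zero (Units.ne_zero _) x.rep_nonzero) = x := by
          rw [(mk_eq_mk_iff (GaloisField p 2) _ _ _ x.rep_nonzero).2
            ⟨c, by simp [Units.smul_def]⟩]
          exact mk_rep x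
        have h2 : Projectivization.mk (GaloisField p 2) ((c' : GaloisField p 2) • x'.rep)
            (smul_ne_zero (Units.ne_zero _) x'.rep_nonzero) = x' := by
          rw [(mk_eq_mk_iff (GaloisField p 2) _ _ _ x'.rep_nonzero).2
            ⟨c', by simp [Units.smul_def]⟩]
          exact mk_rep x'
        rw [← h1, ← h2]
        congr 1
      subst hxx
      have hcc : c = c' := by
        have h3 : ((c : GaloisField p 2) - (c' : GaloisField p 2)) • x.rep = 0 := by
          rw [sub_smul, h, sub_self]
        rcases smul_eq_zero.mp h3 with h4 | h4
        · exact Units.ext (by rwa [sub_eq_zero] at h4)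
        · exact absurd h4 x.rep_nonzero
      rw [hcc]
    · rintro ⟨v, hv, hPv⟩
      obtain ⟨a, ha⟩ := exists_smul_eq_mk_rep (GaloisField p 2) v hv
      refine ⟨⟨⟨Projectivization.mk (GaloisField p 2) v hv, ?_⟩, a⁻¹⟩, ?_⟩
      · rw [← ha]
        exact (hP a v).2 hPv
      · ext
        simp only
        rw [← ha]
        simp [Units.smul_def, smul_smul]
  rw [(Nat.card_eq_of_bijective _ hbij).symm, Nat.card_prod]
  congr 1
  rw [Nat.card_eq_fintype_card, Fintype.card_units, gfCard]

lemma card_split {α : Type*} [Fintype α] (P Q : α → Prop) :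
    Nat.card {x // P x ∧ Q x} + Nat.card {x // P x ∧ ¬ Q x} = Nat.card {x // P x} := by
  classical
  rw [Nat.card_congr (Equiv.subtypeSubtypeEquivSubtypeInter P Q).symm,
    Nat.card_congr (Equiv.subtypeSubtypeEquivSubtypeInter P (fun x => ¬ Q x)).symm,
    ← Nat.card_sum]
  exact Nat.card_congr (Equiv.sumCompl _)

lemma herm_count (n : ℕ) :
    Nat.card {v : Fin n → GaloisField p 2 // v ≠ 0 ∧ ∑ i, v i ^ (p + 1) = 0} =
      hermTheta p n * (p ^ 2 - 1) := by
  rw [hermTheta]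
  apply proj_count
  intro c v
  have h : ∑ i, ((c : GaloisField p 2) • v) i ^ (p + 1) =
      (c : GaloisField p 2) ^ (p + 1) * ∑ i, v i ^ (p + 1) := by
    rw [Finset.mul_sum]
    refine Finset.sum_congr rfl fun i _ => ?_
    simp [mul_pow]
  rw [h, mul_eq_zero]
  simp [pow_eq_zero_iff]

lemma total_count (n : ℕ) :
    Nat.card {v : Fin n → GaloisField p 2 // v ≠ 0} = projCard p n * (p ^ 2 - 1) := by
  have h := proj_count p n (fun _ => True) (by simp)
  rw [Nat.card_congr (Equiv.subtypeEquivRight (q := fun v => v ≠ 0 ∧ True)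
    (fun v => by simp)), h, projCard]
  congr 1
  exact Nat.card_congr (Equiv.subtypeUnivEquiv fun x => trivial)

lemma affine_recursion (n : ℕ) :
    Nat.card {v : Fin (n + 1) → GaloisField p 2 // v ≠ 0 ∧ ∑ i, v i ^ (p + 1) = 0} =
      Nat.card {y : Fin n → GaloisField p 2 // y ≠ 0 ∧ ∑ i, y i ^ (p + 1) = 0} +
        Nat.card {y : Fin n → GaloisField p 2 // y ≠ 0 ∧ ∑ i, y i ^ (p + 1) ≠ 0} *
          (p + 1) := by
  classical
  have hbij : Function.Bijective
      (fun yt : Σ y : {y : Fin n → GaloisField p 2 // y ≠ 0},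
          {t : GaloisField p 2 // t ^ (p + 1) = - ∑ i, y.1 i ^ (p + 1)} =>
        (⟨Fin.cons yt.2.1 yt.1.1, by
            intro h0
            apply yt.1.2
            have := congrArg Fin.tail h0
            rwa [Fin.tail_cons] at this, by
            rw [Fin.sum_univ_succ]
            simp only [Fin.cons_zero, Fin.cons_succ]
            rw [yt.2.2]
            exact neg_add_cancel _⟩ :
          {v : Fin (n + 1) → GaloisField p 2 // v ≠ 0 ∧ ∑ i, v i ^ (p + 1) = 0})) := by
    constructor
    · rintro ⟨⟨y, hy⟩, ⟨t, ht⟩⟩ ⟨⟨y', hy'⟩, ⟨t', ht'⟩⟩ h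
      simp only [Subtype.mk.injEq] at h
      have h1 : t = t' := by
        have := congrFun h 0
        simpa using this
      have h2 : y = y' := by
        have := congrArg Fin.tail h
        rwa [Fin.tail_cons, Fin.tail_cons] at this
      subst h1; subst h2
      rfl
    · rintro ⟨v, hv, hsum⟩
      rw [Fin.sum_univ_succ] at hsum
      have hs : ∑ i : Fin n, v i.succ ^ (p + 1) = ∑ i, (Fin.tail v) i ^ (p + 1) := rfl
      rw [hs] at hsum
      have hy : Fin.tail v ≠ 0 := by
        intro h0
        apply hv
        rw [h0] at hsum
        simp only [Pi.zero_apply, zero_pow (by omega : p + 1 ≠ 0),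
          Finset.sum_const_zero, add_zero] at hsum
        have hv0 : v 0 = 0 := pow_eq_zero_iff (n := p + 1) (by omega) |>.mp hsum
        funext i
        refine Fin.cases ?_ (fun j => ?_) i
        · exact hv0
        · have : Fin.tail v j = 0 := by rw [h0]; rfl
          exact this
      have ht : v 0 ^ (p + 1) = - ∑ i, (Fin.tail v) i ^ (p + 1) :=
        eq_neg_of_add_eq_zero_left hsum
      exact ⟨⟨⟨Fin.tail v, hy⟩, ⟨v 0, ht⟩⟩, Subtype.ext (Fin.cons_self_tail v)⟩
  rw [(Nat.card_eq_of_bijective _ hbij).symm]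
  rw [Nat.card_eq_fintype_card, Fintype.card_sigma]
  have hfib : ∀ y : {y : Fin n → GaloisField p 2 // y ≠ 0},
      Fintype.card {t : GaloisField p 2 // t ^ (p + 1) = - ∑ i, y.1 i ^ (p + 1)} =
        if (∑ i, y.1 i ^ (p + 1)) = 0 then 1 else p + 1 := by
    intro y
    rw [← Nat.card_eq_fintype_card, count_sol p _ (by
      have h1 : (- ∑ i, y.1 i ^ (p + 1)) ^ p = -((∑ i, y.1 i ^ (p + 1)) ^ p) := by
        rw [← frobenius_def, map_neg, frobenius_def]
      rw [h1, herm_fix])]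
    simp [neg_eq_zero]
  rw [Finset.sum_congr rfl fun y _ => hfib y, Finset.sum_ite, Finset.sum_const,
    Finset.sum_const, smul_eq_mul, smul_eq_mul, mul_one]
  congr 1
  · rw [← Fintype.card_subtype, ← Nat.card_eq_fintype_card]
    exact Nat.card_congr (Equiv.subtypeSubtypeEquivSubtypeInter
      (fun y : Fin n → GaloisField p 2 => y ≠ 0)
      (fun y => ∑ i, y i ^ (p + 1) = 0))
  · congr 1
    rw [← Fintype.card_subtype, ← Nat.card_eq_fintype_card]
    exact Nat.card_congr (Equiv.subtypeSubtypeEquivSubtypeInter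
      (fun y : Fin n → GaloisField p 2 => y ≠ 0)
      (fun y => ∑ i, y i ^ (p + 1) ≠ 0))

end Aux

theorem hermTheta_recursion (p : ℕ) [Fact p.Prime] (m : ℕ) (hm : 2 ≤ m) :
    (hermTheta p m : ℤ) =
      (hermTheta p (m - 1) : ℤ) +
        ((projCard p (m - 1) : ℤ) - (hermTheta p (m - 1) : ℤ)) * ((p : ℤ) + 1) := by
  classical
  haveI : Fintype (GaloisField p 2) := Fintype.ofFinite _
  obtain ⟨n, rfl⟩ : ∃ n, m = n + 1 := ⟨m - 1, by omega⟩
  have hn : n + 1 - 1 = n := rfl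
  rw [hn]
  have hp2 : 2 ≤ p := (Fact.out : p.Prime).two_le
  have h1 := affine_recursion p n
  rw [herm_count p (n + 1), herm_count p n] at h1
  have h2 := card_split (α := Fin n → GaloisField p 2) (fun v => v ≠ 0)
    (fun v => ∑ i, v i ^ (p + 1) = 0)
  rw [herm_count p n, total_count p n] at h2
  set C := Nat.card {y : Fin n → GaloisField p 2 // y ≠ 0 ∧ ∑ i, y i ^ (p + 1) ≠ 0}
  have hcast : ((p ^ 2 - 1 : ℕ) : ℤ) = (p : ℤ) ^ 2 - 1 := by
    push_cast [Nat.cast_sub (by nlinarith : 1 ≤ p ^ 2)]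
    ring
  have h1' : (hermTheta p (n + 1) : ℤ) * ((p : ℤ) ^ 2 - 1) =
      (hermTheta p n : ℤ) * ((p : ℤ) ^ 2 - 1) + (C : ℤ) * ((p : ℤ) + 1) := by
    have := congrArg (fun x : ℕ => (x : ℤ)) h1
    push_cast at this
    rw [hcast] at this
    convert this using 2
  have h2' : (hermTheta p n : ℤ) * ((p : ℤ) ^ 2 - 1) + (C : ℤ) =
      (projCard p n : ℤ) * ((p : ℤ) ^ 2 - 1) := by
    have := congrArg (fun x : ℕ => (x : ℤ)) h2
    push_cast at this
    rw [hcast] at this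
    convert this using 2
  have hq : ((p : ℤ) ^ 2 - 1) ≠ 0 := by
    have : (2 : ℤ) ≤ p := by exact_mod_cast hp2
    nlinarith
  apply mul_right_cancel₀ hq
  linear_combination h1' + ((p : ℤ) + 1) * h2'
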